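/- If P is a k×k permutation matrix with k ≥ 3 different from I_k and H_k, then P contains a 0-entry (namely the center of a 3×3 'non-monotone' window of three consecutive rows and three consecutive columns) that lies in none of NW(P), NE(P), SW(P), SE(P); hence |NW(P)|+|NE(P)|+|SW(P)|+|SE(P)| < k(k−1). -/

import Mathlib

open Finset

/-- Number of 1-entries of a (0,1)-matrix. -/
def onesCount {m n : ℕ} (A : Fin m → Fin n → Bool) : ℕ :=
  (Finset.univ.filter (fun p : Fin m × Fin n => A p.1 p.2 = true)).card

/-- Number of 0-entries of a (0,1)-matrix. -/
def zerosCount {m n : ℕ} (A : Fin m → Fin n → Bool) : ℕ :=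
  (Finset.univ.filter (fun p : Fin m × Fin n => A p.1 p.2 = false)).card

/-- `A` is `Q`-forcing: every s×t submatrix of `A` is entrywise ≥ Q. -/
def IsForcing {m n s t : ℕ} (A : Fin m → Fin n → Bool) (Q : Fin s → Fin t → Bool) : Prop :=
  ∀ (r : Fin s → Fin m) (c : Fin t → Fin n), StrictMono r → StrictMono c →
    ∀ y x, Q y x = true → A (r y) (c x) = true

/-- Minimum number of 1-entries of an m×n Q-forcing matrix. -/
noncomputable def mMin (m n : ℕ) {s t : ℕ} (Q : Fin s → Fin t → Bool) : ℕ :=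
  sInf {v | ∃ A : Fin m → Fin n → Bool, IsForcing A Q ∧ onesCount A = v}

/-- `A` is strongly `Q`-forcing: every 1-entry lies in a submatrix exactly equal to `Q`. -/
def IsStronglyForcing {m n s t : ℕ} (A : Fin m → Fin n → Bool)
    (Q : Fin s → Fin t → Bool) : Prop :=
  ∀ i j, A i j = true → ∃ (r : Fin s → Fin m) (c : Fin t → Fin n),
    StrictMono r ∧ StrictMono c ∧ (∀ y x, A (r y) (c x) = Q y x) ∧
    ∃ y x, r y = i ∧ c x = j

/-- Maximum number of 1-entries of an m×n strongly Q-forcing matrix. -/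
noncomputable def MMax (m n : ℕ) {s t : ℕ} (Q : Fin s → Fin t → Bool) : ℕ :=
  sSup {v | ∃ A : Fin m → Fin n → Bool, IsStronglyForcing A Q ∧ onesCount A = v}

/-- Corner sets of 0-positions with no 1-entry weakly in the given quadrant direction. -/
def cornerNW {s t : ℕ} (Q : Fin s → Fin t → Bool) : Finset (Fin s × Fin t) :=
  Finset.univ.filter (fun p => ∀ i' j', i' ≤ p.1 → j' ≤ p.2 → Q i' j' = false)

def cornerNE {s t : ℕ} (Q : Fin s → Fin t → Bool) : Finset (Fin s × Fin t) :=
  Finset.univ.filter (fun p => ∀ i' j', i' ≤ p.1 → p.2 ≤ j' → Q i' j' = false)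

def cornerSW {s t : ℕ} (Q : Fin s → Fin t → Bool) : Finset (Fin s × Fin t) :=
  Finset.univ.filter (fun p => ∀ i' j', p.1 ≤ i' → j' ≤ p.2 → Q i' j' = false)

def cornerSE {s t : ℕ} (Q : Fin s → Fin t → Bool) : Finset (Fin s × Fin t) :=
  Finset.univ.filter (fun p => ∀ i' j', p.1 ≤ i' → p.2 ≤ j' → Q i' j' = false)

/-- `P` is a permutation matrix. -/
def IsPermMatrix {k : ℕ} (P : Fin k → Fin k → Bool) : Prop :=
  ∃ σ : Equiv.Perm (Fin k), ∀ i j, P i j = decide (σ i = j)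

section Aux

/-- A function on `Fin k` all of whose triples are monotone increasing-or-decreasing,
with an increasing initial pair, is strictly monotone. -/
lemma auxStrictMono {k : ℕ} (f : Fin k → Fin k)
    (hmono3 : ∀ a b c : Fin k, a < b → b < c →
      (f a < f b ∧ f b < f c) ∨ (f c < f b ∧ f b < f a))
    {z0 z1 : Fin k} (h0 : (z0 : ℕ) = 0) (h1 : (z1 : ℕ) = 1)
    (h01 : f z0 < f z1) : StrictMono f := by
  have hz01 : z0 < z1 := by rw [Fin.lt_def, h0, h1]; omega
  have hstep : ∀ b, z1 < b → f z1 < f b := by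
    intro b hb
    rcases hmono3 z0 z1 b hz01 hb with ⟨_, h⟩ | ⟨_, h⟩
    · exact h
    · exact absurd h01 (not_lt.2 h.le)
  intro a b hab
  rcases lt_trichotomy a z1 with ha | ha | ha
  · have haz : a = z0 := by
      apply Fin.ext
      rw [Fin.lt_def, h1] at ha
      omega
    subst haz
    rcases lt_trichotomy b z1 with hb | hb | hb
    · exfalso
      rw [Fin.lt_def, h1] at hb
      rw [Fin.lt_def, h0] at hab
      omega
    · subst hb; exact h01
    · exact h01.trans (hstep b hb)
  · subst ha; exact hstep b hab
  · rcases hmono3 z1 a b ha hab with ⟨_, h⟩ | ⟨_, h⟩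
    · exact h
    · exact absurd (hstep a ha) (not_lt.2 h.le)

end Aux

theorem stmt9 (k : ℕ) (hk : 3 ≤ k) (P : Fin k → Fin k → Bool) (hP : IsPermMatrix P)
    (hI : P ≠ fun i j => decide (i = j))
    (hH : P ≠ fun (i j : Fin k) => decide ((i : ℕ) + (j : ℕ) = k - 1)) :
    (∃ (i j : Fin k), P i j = false ∧ (i, j) ∉ cornerNW P ∧ (i, j) ∉ cornerNE P ∧
      (i, j) ∉ cornerSW P ∧ (i, j) ∉ cornerSE P) ∧
    (cornerNW P).card + (cornerNE P).card + (cornerSW P).card + (cornerSE P).card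
      < k * (k - 1) := by
  obtain ⟨σ, hσ⟩ := hP
  have hPt : ∀ i j, P i j = true ↔ σ i = j := by intro i j; rw [hσ]; simp
  have hPf : ∀ i j, P i j = false ↔ σ i ≠ j := by intro i j; rw [hσ]; simp
  -- a non-monotone triple exists
  have htriple : ∃ a b c : Fin k, a < b ∧ b < c ∧
      ((σ b < σ a ∧ σ b < σ c) ∨ (σ a < σ b ∧ σ c < σ b)) := by
    by_contra hcon
    have hmono3 : ∀ a b c : Fin k, a < b → b < c →
        (σ a < σ b ∧ σ b < σ c) ∨ (σ c < σ b ∧ σ b < σ a) := by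
      intro a b c hab hbc
      rcases lt_or_gt_of_ne (σ.injective.ne (ne_of_lt hab)) with h1 | h1
      · rcases lt_or_gt_of_ne (σ.injective.ne (ne_of_lt hbc)) with h2 | h2
        · exact Or.inl ⟨h1, h2⟩
        · exact absurd ⟨a, b, c, hab, hbc, Or.inr ⟨h1, h2⟩⟩ hcon
      · rcases lt_or_gt_of_ne (σ.injective.ne (ne_of_lt hbc)) with h2 | h2
        · exact absurd ⟨a, b, c, hab, hbc, Or.inl ⟨h1, h2⟩⟩ hcon
        · exact Or.inr ⟨h2, h1⟩
    have instWF : WellFoundedLT (Fin k) := inferInstance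
    set z0 : Fin k := ⟨0, by omega⟩ with hz0
    set z1 : Fin k := ⟨1, by omega⟩ with hz1
    rcases lt_or_gt_of_ne (σ.injective.ne (show z0 ≠ z1 by
        intro h; rw [Fin.ext_iff] at h; simp [hz0, hz1] at h)) with hlt | hlt
    · -- σ strictly monotone, hence identity
      have hmono : StrictMono σ := auxStrictMono σ hmono3 rfl rfl hlt
      have hid : (σ : Fin k → Fin k) = id :=
        (@StrictMono.range_inj (Fin k) (Fin k) _ _ instWF _ _ hmono strictMono_id).1 (by
          rw [Set.range_id]
          exact Set.range_eq_univ.2 σ.surjective)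
      apply hI
      funext i j
      rw [hσ]
      have : σ i = i := congrFun hid i
      simp [this]
    · -- rev ∘ σ strictly monotone, hence σ = rev
      have hmono3' : ∀ a b c : Fin k, a < b → b < c →
          ((σ a).rev < (σ b).rev ∧ (σ b).rev < (σ c).rev) ∨
          ((σ c).rev < (σ b).rev ∧ (σ b).rev < (σ a).rev) := by
        intro a b c hab hbc
        rcases hmono3 a b c hab hbc with ⟨h1, h2⟩ | ⟨h1, h2⟩
        · exact Or.inr ⟨Fin.rev_lt_rev.2 h2, Fin.rev_lt_rev.2 h1⟩
        · exact Or.inl ⟨Fin.rev_lt_rev.2 h2, Fin.rev_lt_rev.2 h1⟩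
      have hmono : StrictMono (fun i => (σ i).rev) :=
        auxStrictMono (fun i => (σ i).rev) hmono3' (z0 := z0) (z1 := z1) rfl rfl
          (Fin.rev_lt_rev.2 hlt)
      have hid : (fun i : Fin k => (σ i).rev) = id :=
        (@StrictMono.range_inj (Fin k) (Fin k) _ _ instWF _ _ hmono strictMono_id).1 (by
          rw [Set.range_id]
          exact Set.range_eq_univ.2 (fun x => ⟨σ.symm x.rev, by simp⟩))
      have hrev : ∀ i, σ i = Fin.rev i := by
        intro i
        have h2 : (σ i).rev = i := congrFun hid i
        exact (Fin.rev_rev (σ i)).symm.trans (congrArg Fin.rev h2)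
      apply hH
      funext i j
      rw [hσ, hrev]
      apply decide_eq_decide.2
      constructor
      · rintro rfl
        rw [Fin.val_rev]
        have := i.isLt
        omega
      · intro h
        apply Fin.ext
        rw [Fin.val_rev]
        have := i.isLt
        have := j.isLt
        omega
  obtain ⟨a, b, c, hab, hbc, hcase⟩ := htriple
  -- a good zero position with 1-entries in all four quadrants
  have key : ∃ i j : Fin k, P i j = false ∧
      (∃ a', a' ≤ i ∧ σ a' ≤ j) ∧ (∃ a', a' ≤ i ∧ j ≤ σ a') ∧
      (∃ a', i ≤ a' ∧ σ a' ≤ j) ∧ (∃ a', i ≤ a' ∧ j ≤ σ a') := by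
    rcases hcase with ⟨h1, h2⟩ | ⟨h1, h2⟩
    · refine ⟨b, min (σ a) (σ c), ?_, ⟨b, le_refl _, ?_⟩, ⟨a, hab.le, ?_⟩,
        ⟨b, le_refl _, ?_⟩, ⟨c, hbc.le, ?_⟩⟩
      · rw [hPf]; exact ne_of_lt (lt_min h1 h2)
      · exact (lt_min h1 h2).le
      · exact min_le_left _ _
      · exact (lt_min h1 h2).le
      · exact min_le_right _ _
    · refine ⟨b, max (σ a) (σ c), ?_, ⟨a, hab.le, ?_⟩, ⟨b, le_refl _, ?_⟩,
        ⟨c, hbc.le, ?_⟩, ⟨b, le_refl _, ?_⟩⟩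
      · rw [hPf]; exact (ne_of_lt (max_lt h1 h2)).symm
      · exact le_max_left _ _
      · exact (max_lt h1 h2).le
      · exact le_max_right _ _
      · exact (max_lt h1 h2).le
  obtain ⟨i, j, hfalse, ⟨w1, hw1a, hw1b⟩, ⟨w2, hw2a, hw2b⟩, ⟨w3, hw3a, hw3b⟩,
    ⟨w4, hw4a, hw4b⟩⟩ := key
  have hnotNW : (i, j) ∉ cornerNW P := by
    intro hmem
    simp only [cornerNW, Finset.mem_filter, Finset.mem_univ, true_and] at hmem
    have := hmem w1 (σ w1) hw1a hw1b
    rw [hPf] at this; exact this rfl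
  have hnotNE : (i, j) ∉ cornerNE P := by
    intro hmem
    simp only [cornerNE, Finset.mem_filter, Finset.mem_univ, true_and] at hmem
    have := hmem w2 (σ w2) hw2a hw2b
    rw [hPf] at this; exact this rfl
  have hnotSW : (i, j) ∉ cornerSW P := by
    intro hmem
    simp only [cornerSW, Finset.mem_filter, Finset.mem_univ, true_and] at hmem
    have := hmem w3 (σ w3) hw3a hw3b
    rw [hPf] at this; exact this rfl
  have hnotSE : (i, j) ∉ cornerSE P := by
    intro hmem
    simp only [cornerSE, Finset.mem_filter, Finset.mem_univ, true_and] at hmem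
    have := hmem w4 (σ w4) hw4a hw4b
    rw [hPf] at this; exact this rfl
  refine ⟨⟨i, j, hfalse, hnotNW, hnotNE, hnotSW, hnotSE⟩, ?_⟩
  -- counting
  set Z : Finset (Fin k × Fin k) :=
    Finset.univ.filter (fun p => P p.1 p.2 = false) with hZ
  have hNWsub : cornerNW P ⊆ Z := by
    intro p hp
    simp only [cornerNW, Finset.mem_filter, Finset.mem_univ, true_and] at hp
    simp only [hZ, Finset.mem_filter, Finset.mem_univ, true_and]
    exact hp p.1 p.2 le_rfl le_rfl
  have hNEsub : cornerNE P ⊆ Z := by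
    intro p hp
    simp only [cornerNE, Finset.mem_filter, Finset.mem_univ, true_and] at hp
    simp only [hZ, Finset.mem_filter, Finset.mem_univ, true_and]
    exact hp p.1 p.2 le_rfl le_rfl
  have hSWsub : cornerSW P ⊆ Z := by
    intro p hp
    simp only [cornerSW, Finset.mem_filter, Finset.mem_univ, true_and] at hp
    simp only [hZ, Finset.mem_filter, Finset.mem_univ, true_and]
    exact hp p.1 p.2 le_rfl le_rfl
  have hSEsub : cornerSE P ⊆ Z := by
    intro p hp
    simp only [cornerSE, Finset.mem_filter, Finset.mem_univ, true_and] at hp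
    simp only [hZ, Finset.mem_filter, Finset.mem_univ, true_and]
    exact hp p.1 p.2 le_rfl le_rfl
  -- disjointness
  have dNW_NE : Disjoint (cornerNW P) (cornerNE P) := by
    rw [Finset.disjoint_left]
    rintro ⟨x, y⟩ hm1 hm2
    simp only [cornerNW, cornerNE, Finset.mem_filter, Finset.mem_univ, true_and] at hm1 hm2
    rcases le_total (σ x) y with h | h
    · have := hm1 x (σ x) le_rfl h; rw [hPf] at this; exact this rfl
    · have := hm2 x (σ x) le_rfl h; rw [hPf] at this; exact this rfl
  have dSW_SE : Disjoint (cornerSW P) (cornerSE P) := by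
    rw [Finset.disjoint_left]
    rintro ⟨x, y⟩ hm1 hm2
    simp only [cornerSW, cornerSE, Finset.mem_filter, Finset.mem_univ, true_and] at hm1 hm2
    rcases le_total (σ x) y with h | h
    · have := hm1 x (σ x) le_rfl h; rw [hPf] at this; exact this rfl
    · have := hm2 x (σ x) le_rfl h; rw [hPf] at this; exact this rfl
  have dNW_SW : Disjoint (cornerNW P) (cornerSW P) := by
    rw [Finset.disjoint_left]
    rintro ⟨x, y⟩ hm1 hm2
    simp only [cornerNW, cornerSW, Finset.mem_filter, Finset.mem_univ, true_and] at hm1 hm2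
    rcases le_total (σ.symm y) x with h | h
    · have := hm1 (σ.symm y) y h le_rfl
      rw [hPf] at this; exact this (σ.apply_symm_apply y)
    · have := hm2 (σ.symm y) y h le_rfl
      rw [hPf] at this; exact this (σ.apply_symm_apply y)
  have dNE_SE : Disjoint (cornerNE P) (cornerSE P) := by
    rw [Finset.disjoint_left]
    rintro ⟨x, y⟩ hm1 hm2
    simp only [cornerNE, cornerSE, Finset.mem_filter, Finset.mem_univ, true_and] at hm1 hm2
    rcases le_total (σ.symm y) x with h | h
    · have := hm1 (σ.symm y) y h le_rfl
      rw [hPf] at this; exact this (σ.apply_symm_apply y)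
    · have := hm2 (σ.symm y) y h le_rfl
      rw [hPf] at this; exact this (σ.apply_symm_apply y)
  have dNW_SE : Disjoint (cornerNW P) (cornerSE P) := by
    rw [Finset.disjoint_left]
    rintro ⟨x, y⟩ hm1 hm2
    simp only [cornerNW, cornerSE, Finset.mem_filter, Finset.mem_univ, true_and] at hm1 hm2
    rcases le_total (σ x) y with h | h
    · have := hm1 x (σ x) le_rfl h; rw [hPf] at this; exact this rfl
    · have := hm2 x (σ x) le_rfl h; rw [hPf] at this; exact this rfl
  have dNE_SW : Disjoint (cornerNE P) (cornerSW P) := by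
    rw [Finset.disjoint_left]
    rintro ⟨x, y⟩ hm1 hm2
    simp only [cornerNE, cornerSW, Finset.mem_filter, Finset.mem_univ, true_and] at hm1 hm2
    rcases le_total (σ x) y with h | h
    · have := hm2 x (σ x) le_rfl h; rw [hPf] at this; exact this rfl
    · have := hm1 x (σ x) le_rfl h; rw [hPf] at this; exact this rfl
  have hcardU : (cornerNW P).card + (cornerNE P).card + (cornerSW P).card
      + (cornerSE P).card
      = (cornerNW P ∪ cornerNE P ∪ cornerSW P ∪ cornerSE P).card := by
    rw [Finset.card_union_of_disjoint
        (Finset.disjoint_union_left.2 ⟨Finset.disjoint_union_left.2 ⟨dNW_SE, dNE_SE⟩, dSW_SE⟩),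
      Finset.card_union_of_disjoint
        (Finset.disjoint_union_left.2 ⟨dNW_SW, dNE_SW⟩),
      Finset.card_union_of_disjoint dNW_NE]
  have hxZ : (i, j) ∈ Z := by
    simp only [hZ, Finset.mem_filter, Finset.mem_univ, true_and]
    exact hfalse
  have hUsub : cornerNW P ∪ cornerNE P ∪ cornerSW P ∪ cornerSE P ⊆ Z.erase (i, j) := by
    intro p hp
    rw [Finset.mem_erase]
    simp only [Finset.mem_union] at hp
    constructor
    · rintro rfl
      rcases hp with ((h | h) | h) | h
      · exact hnotNW h
      · exact hnotNE h
      · exact hnotSW h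
      · exact hnotSE h
    · rcases hp with ((h | h) | h) | h
      · exact hNWsub h
      · exact hNEsub h
      · exact hSWsub h
      · exact hSEsub h
  have hones : (Finset.univ.filter (fun p : Fin k × Fin k => P p.1 p.2 = true)).card = k := by
    have himg : Finset.univ.filter (fun p : Fin k × Fin k => P p.1 p.2 = true)
        = Finset.univ.image (fun i : Fin k => (i, σ i)) := by
      ext ⟨x, y⟩
      simp only [Finset.mem_filter, Finset.mem_univ, true_and, Finset.mem_image, hPt]
      constructor
      · rintro rfl; exact ⟨x, rfl⟩
      · rintro ⟨z, hz⟩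
        rw [Prod.ext_iff] at hz
        obtain ⟨rfl, rfl⟩ := hz
        rfl
    rw [himg, Finset.card_image_of_injective _ (fun x y h => (Prod.ext_iff.1 h).1),
      Finset.card_univ, Fintype.card_fin]
  have hZcard : Z.card = k * k - k := by
    have htot := Finset.card_filter_add_card_filter_not
      (s := (Finset.univ : Finset (Fin k × Fin k)))
      (p := fun p : Fin k × Fin k => P p.1 p.2 = true)
    simp only [Bool.not_eq_true] at htot
    rw [hones] at htot
    have huniv : (Finset.univ : Finset (Fin k × Fin k)).card = k * k := by
      rw [Finset.card_univ, Fintype.card_prod, Fintype.card_fin]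
    rw [huniv] at htot
    rw [hZ]
    omega
  have hmul : k * k - k = k * (k - 1) := by
    cases k with
    | zero => rfl
    | succ n => rw [Nat.succ_sub_one, Nat.mul_succ, Nat.add_sub_cancel]
  have hZpos : 1 ≤ Z.card := Finset.card_pos.2 ⟨(i, j), hxZ⟩
  calc (cornerNW P).card + (cornerNE P).card + (cornerSW P).card + (cornerSE P).card
      = (cornerNW P ∪ cornerNE P ∪ cornerSW P ∪ cornerSE P).card := hcardU
    _ ≤ (Z.erase (i, j)).card := Finset.card_le_card hUsub
    _ = Z.card - 1 := Finset.card_erase_of_mem hxZ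
    _ < Z.card := by omega
    _ = k * (k - 1) := by rw [hZcard, hmul]
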